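/- Let g : ℝ → ℝ be defined by g(x) = 0 for x ≤ 0 and g(x) = 2^(2i) + 3·2^i·(x − 2^i) for x > 0, where i ∈ ℤ is the unique integer with 2^i ≤ x < 2^(i+1). Then for every integer i, g is not differentiable at the point x = 2^i. -/

import Mathlib

lemma affine_hasDerivAt (c m a x : ℝ) :
    HasDerivAt (fun y : ℝ => c + m * (y - a)) m x := by
  have h := (((hasDerivAt_id x).sub_const a).const_mul m).const_add c
  simpa using h

/-- Example 3.8: the piecewise affine function `g`, defined by `g x = 0` for `x ≤ 0` and
`g x = 2^(2*i) + 3 * 2^i * (x - 2^i)` for `x > 0`, where `i : ℤ` is the unique integer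
with `2^i ≤ x < 2^(i+1)`, fails to be differentiable at each point `x = 2^i`, `i : ℤ`. -/
theorem not_differentiableAt_piecewise_affine_g (g : ℝ → ℝ)
    (h0 : ∀ x : ℝ, x ≤ 0 → g x = 0)
    (h1 : ∀ (x : ℝ) (i : ℤ), (2 : ℝ) ^ i ≤ x → x < (2 : ℝ) ^ (i + 1) →
      g x = (2 : ℝ) ^ (2 * i) + 3 * (2 : ℝ) ^ i * (x - (2 : ℝ) ^ i)) :
    ∀ i : ℤ, ¬ DifferentiableAt ℝ g ((2 : ℝ) ^ i) := by
  intro i h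
  set x₀ : ℝ := (2 : ℝ) ^ i with hx₀
  have h2 : (1 : ℝ) < 2 := one_lt_two
  have hlt : x₀ < (2 : ℝ) ^ (i + 1) := by
    exact zpow_lt_zpow_right₀ h2 (by omega)
  have hlt' : (2 : ℝ) ^ (i - 1) < x₀ := zpow_lt_zpow_right₀ h2 (by omega)
  have hgx₀ : g x₀ = (2 : ℝ) ^ (2 * i) := by
    have := h1 x₀ i le_rfl hlt
    simpa [hx₀] using this
  -- value of the left affine piece at x₀
  have hval : (2 : ℝ) ^ (2 * (i - 1)) + 3 * (2 : ℝ) ^ (i - 1) * (x₀ - (2 : ℝ) ^ (i - 1))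
      = (2 : ℝ) ^ (2 * i) := by
    have e1 : (2 : ℝ) ^ i = 2 * (2 : ℝ) ^ (i - 1) := by
      rw [show i = (i - 1) + 1 by omega, zpow_add₀ (by norm_num : (2:ℝ) ≠ 0)]
      ring
    have e2 : (2 : ℝ) ^ (2 * (i - 1)) = ((2 : ℝ) ^ (i - 1)) ^ 2 := by
      rw [mul_comm, zpow_mul]; norm_num
    have e3 : (2 : ℝ) ^ (2 * i) = ((2 : ℝ) ^ i) ^ 2 := by
      rw [mul_comm, zpow_mul]; norm_num
    rw [hx₀, e2, e3, e1]; ring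
  have hd := h.hasDerivAt
  set d := deriv g x₀
  -- right derivative
  have hr : HasDerivWithinAt g (3 * (2 : ℝ) ^ i) (Set.Ici x₀) x₀ := by
    refine ((affine_hasDerivAt ((2:ℝ)^(2*i)) (3 * (2:ℝ)^i) x₀ x₀).hasDerivWithinAt).congr_of_eventuallyEq ?_ ?_
    · filter_upwards [Ico_mem_nhdsGE_of_mem ⟨le_rfl, hlt⟩] with x hx
      exact h1 x i hx.1 hx.2
    · simpa using hgx₀
  -- left derivative
  have hl : HasDerivWithinAt g (3 * (2 : ℝ) ^ (i - 1)) (Set.Iic x₀) x₀ := by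
    refine ((affine_hasDerivAt ((2:ℝ)^(2*(i-1))) (3 * (2:ℝ)^(i-1)) ((2:ℝ)^(i-1)) x₀).hasDerivWithinAt).congr_of_eventuallyEq ?_ ?_
    · filter_upwards [Ioc_mem_nhdsLE_of_mem ⟨hlt', le_rfl⟩] with x hx
      rcases lt_or_eq_of_le hx.2 with hxlt | hxeq
      · have := h1 x (i - 1) hx.1.le (by simpa using hxlt)
        simpa using this
      · rw [hxeq, hgx₀, ← hval]
    · rw [hgx₀, ← hval]
  have hur : d = 3 * (2 : ℝ) ^ i := by
    have hu := uniqueDiffOn_Ici x₀ x₀ Set.self_mem_Ici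
    rw [← (hd.hasDerivWithinAt (s := Set.Ici x₀)).derivWithin hu, hr.derivWithin hu]
  have hul : d = 3 * (2 : ℝ) ^ (i - 1) := by
    have hu := uniqueDiffOn_Iic x₀ x₀ Set.self_mem_Iic
    rw [← (hd.hasDerivWithinAt (s := Set.Iic x₀)).derivWithin hu, hl.derivWithin hu]
  have : (2 : ℝ) ^ (i - 1) < (2 : ℝ) ^ i := hlt'
  rw [hur] at hul
  nlinarith [zpow_pos (by norm_num : (0:ℝ) < 2) (i - 1)]
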